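/- For all n ≥ 2, the bi-periodic Jacobsthal numbers satisfy j_{2n} = (ab+4)·j_{2n-2} − 4·j_{2n-4} and j_{2n+1} = (ab+4)·j_{2n-1} − 4·j_{2n-3}. -/

import Mathlib

noncomputable def jj (a b : ℝ) : ℕ → ℝ
  | 0 => 0
  | 1 => 1
  | n + 2 => (if Even (n + 2) then a else b) * jj a b (n + 1) + 2 * jj a b n

theorem stmt0 (a b : ℝ) (ha : a ≠ 0) (hb : b ≠ 0) (n : ℕ) (hn : 2 ≤ n) :
    jj a b (2 * n) = (a * b + 4) * jj a b (2 * n - 2) - 4 * jj a b (2 * n - 4) ∧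
    jj a b (2 * n + 1) = (a * b + 4) * jj a b (2 * n - 1) - 4 * jj a b (2 * n - 3) := by
  obtain ⟨m, rfl⟩ := Nat.exists_eq_add_of_le hn
  have h1 : 2 * (2 + m) = 2 * m + 4 := by ring
  have h2 : 2 * (2 + m) - 2 = 2 * m + 2 := by omega
  have h3 : 2 * (2 + m) - 4 = 2 * m := by omega
  have h4 : 2 * (2 + m) + 1 = 2 * m + 5 := by omega
  have h5 : 2 * (2 + m) - 1 = 2 * m + 3 := by omega
  have h6 : 2 * (2 + m) - 3 = 2 * m + 1 := by omega
  rw [h1, show 2*m+4-2=2*m+2 from by omega, show 2*m+4-4=2*m from by omega,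
    show 2*m+4+1=2*m+5 from rfl, show 2*m+4-1=2*m+3 from by omega,
    show 2*m+4-3=2*m+1 from by omega]
  have e4 : jj a b (2 * m + 4) = a * jj a b (2 * m + 3) + 2 * jj a b (2 * m + 2) := by
    rw [show 2 * m + 4 = (2 * m + 2) + 2 from rfl, jj, if_pos (Nat.even_iff.2 (by omega))]
  have e3 : jj a b (2 * m + 3) = b * jj a b (2 * m + 2) + 2 * jj a b (2 * m + 1) := by
    rw [show 2 * m + 3 = (2 * m + 1) + 2 from rfl, jj, if_neg (by simp [Nat.even_iff])]
  have e2 : jj a b (2 * m + 2) = a * jj a b (2 * m + 1) + 2 * jj a b (2 * m) := by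
    rw [show 2 * m + 2 = (2 * m) + 2 from rfl, jj, if_pos (Nat.even_iff.2 (by omega))]
  have e5 : jj a b (2 * m + 5) = b * jj a b (2 * m + 4) + 2 * jj a b (2 * m + 3) := by
    rw [show 2 * m + 5 = (2 * m + 3) + 2 from rfl, jj, if_neg (by simp [Nat.even_iff])]
  constructor
  · rw [e4, e3, e2]; ring
  · rw [e5, e4, e3, e2]; ring
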